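/- Let μ be a probability measure on ℝ^d with finite first moment, and E : ℝ^d → ℝ continuous with a global minimizer x̄. Assume the inverse continuity conditions: there are η, ν, R₀, E∞ > 0 with η|x - x̄| ≤ |E(x) - E(x̄)|^ν for all x ∈ B_{R₀}(x̄), and E(x) - E(x̄) > E∞ for all x ∉ B_{R₀}(x̄). Fix 0 < q ≤ E∞/2 and r ∈ (0, R₀] with sup_{x ∈ B_r(x̄)} |E(x) - E(x̄)| ≤ q. Then the Gibbs-weighted mean X_α = (∫ x e^{-αE} dμ)/(∫ e^{-αE} dμ) satisfies |x̄ - X_α| ≤ (2q)^ν/η + (exp(-αq)/μ(B_r(x̄))) · ∫ |x - x̄| μ(dx), provided μ(B_r(x̄)) > 0. -/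

import Mathlib

open MeasureTheory

theorem stmt6 {d : ℕ} (μ : Measure (EuclideanSpace ℝ (Fin d))) [IsProbabilityMeasure μ]
    (E : EuclideanSpace ℝ (Fin d) → ℝ) (hEc : Continuous E)
    (xbar : EuclideanSpace ℝ (Fin d)) (hmin : ∀ x, E xbar ≤ E x)
    (η ν R₀ Einf : ℝ) (hη : 0 < η) (hν : 0 < ν) (hR₀ : 0 < R₀) (hEinf : 0 < Einf)
    (hinv : ∀ x, (∀ k, |x k - xbar k| ≤ R₀) → η * ‖x - xbar‖ ≤ |E x - E xbar| ^ ν)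
    (hfar : ∀ x, ¬ (∀ k, |x k - xbar k| ≤ R₀) → Einf < E x - E xbar)
    (q r : ℝ) (hq : 0 < q) (hqE : q ≤ Einf / 2) (hr : 0 < r) (hrR : r ≤ R₀)
    (hosc : ∀ x, (∀ k, |x k - xbar k| ≤ r) → |E x - E xbar| ≤ q)
    (α : ℝ) (hα : 0 < α)
    (hmom : Integrable (fun x => ‖x‖) μ)
    (hintw : Integrable (fun x => Real.exp (-α * E x)) μ)
    (hintwx : Integrable (fun x => Real.exp (-α * E x) • x) μ)
    (Br : Set (EuclideanSpace ℝ (Fin d)))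
    (hBr : Br = {x | ∀ k, |x k - xbar k| ≤ r})
    (hmass : 0 < μ Br)
    (Xα : EuclideanSpace ℝ (Fin d))
    (hXα : Xα = (∫ x, Real.exp (-α * E x) ∂μ)⁻¹ • ∫ x, Real.exp (-α * E x) • x ∂μ) :
    ‖xbar - Xα‖ ≤ (2 * q) ^ ν / η +
      Real.exp (-α * q) / (μ Br).toReal * ∫ x, ‖x - xbar‖ ∂μ := by
  set w : EuclideanSpace ℝ (Fin d) → ℝ := fun x => Real.exp (-α * E x) with hw
  have hw0 : ∀ x, 0 < w x := fun x => Real.exp_pos _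
  -- Integrability of ‖x - xbar‖
  have hcont_sub : Continuous fun x : EuclideanSpace ℝ (Fin d) => ‖x - xbar‖ :=
    (continuous_id.sub continuous_const).norm
  have hmom' : Integrable (fun x => ‖x - xbar‖) μ := by
    refine (hmom.add (integrable_const ‖xbar‖)).mono' hcont_sub.aestronglyMeasurable ?_
    filter_upwards with x
    rw [Real.norm_eq_abs, abs_of_nonneg (norm_nonneg _)]
    exact (norm_sub_le x xbar)
  -- Integrability of w x * ‖xbar - x‖
  have hf : Integrable (fun x => w x * ‖xbar - x‖) μ := by
    refine (hmom'.const_mul (Real.exp (-α * E xbar))).mono'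
      (((continuous_const.mul hEc).rexp.mul
        (continuous_const.sub continuous_id).norm).aestronglyMeasurable) ?_
    filter_upwards with x
    rw [Real.norm_eq_abs, abs_of_nonneg (mul_nonneg (hw0 x).le (norm_nonneg _)),
      norm_sub_rev]
    have : w x ≤ Real.exp (-α * E xbar) :=
      Real.exp_le_exp.2 (by nlinarith [hmin x])
    exact mul_le_mul_of_nonneg_right this (norm_nonneg _)
  set I := ∫ x, w x ∂μ with hI
  set B := (μ Br).toReal with hBdef
  have hBpos : 0 < B := ENNReal.toReal_pos hmass.ne' (measure_ne_top μ Br)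
  -- Br is measurable (closed)
  have hcoord : ∀ (k : Fin d) (s : ℝ),
      IsClosed {x : EuclideanSpace ℝ (Fin d) | |x k - xbar k| ≤ s} := by
    intro k s
    have hc : Continuous fun x : EuclideanSpace ℝ (Fin d) => |x k - xbar k| :=
      (((EuclideanSpace.proj k).continuous).sub continuous_const).abs
    exact isClosed_le hc continuous_const
  have hBall : ∀ s : ℝ,
      IsClosed {x : EuclideanSpace ℝ (Fin d) | ∀ k, |x k - xbar k| ≤ s} := by
    intro s
    have : {x : EuclideanSpace ℝ (Fin d) | ∀ k, |x k - xbar k| ≤ s}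
        = ⋂ k, {x | |x k - xbar k| ≤ s} := by
      ext x; simp [Set.mem_iInter]
    rw [this]
    exact isClosed_iInter fun k => hcoord k s
  have hBrmeas : MeasurableSet Br := by
    rw [hBr]; exact (hBall r).measurableSet
  -- Lower bound for I
  have hc_le_w : ∀ x ∈ Br, Real.exp (-α * (E xbar + q)) ≤ w x := by
    intro x hx
    rw [hBr] at hx
    have h1 : |E x - E xbar| ≤ q := hosc x hx
    have h2 : E x ≤ E xbar + q := by
      have := abs_le.1 h1; linarith [this.2]
    exact Real.exp_le_exp.2 (by nlinarith)
  have hwint : IntegrableOn w Br μ := hintw.integrableOn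
  have hIlb : Real.exp (-α * (E xbar + q)) * B ≤ I := by
    calc Real.exp (-α * (E xbar + q)) * B
        = ∫ _ in Br, Real.exp (-α * (E xbar + q)) ∂μ := by
          rw [setIntegral_const, smul_eq_mul, mul_comm]; rfl
      _ ≤ ∫ x in Br, w x ∂μ := by
          refine setIntegral_mono_on (integrableOn_const (LT.lt.ne ?_)) hwint hBrmeas hc_le_w
          exact lt_of_le_of_lt (measure_mono (Set.subset_univ _)) (by simp [measure_lt_top])
      _ ≤ I := setIntegral_le_integral hintw (by filter_upwards with x; exact (hw0 x).le)
  have hIpos : 0 < I :=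
    lt_of_lt_of_le (mul_pos (Real.exp_pos _) hBpos) hIlb
  -- the identity xbar - Xα = I⁻¹ • ∫ w • (xbar - x)
  have hkey : xbar - Xα = I⁻¹ • ∫ x, w x • (xbar - x) ∂μ := by
    have hsub : ∫ x, w x • (xbar - x) ∂μ
        = I • xbar - ∫ x, w x • x ∂μ := by
      have h1 : (fun x => w x • (xbar - x)) = fun x => w x • xbar - w x • x := by
        funext x; rw [smul_sub]
      rw [h1, integral_sub (hintw.smul_const xbar) hintwx, integral_smul_const]
    rw [hXα, hsub, smul_sub, smul_smul, inv_mul_cancel₀ hIpos.ne', one_smul]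
  -- norm bound
  have hnorm1 : ‖xbar - Xα‖ ≤ I⁻¹ * ∫ x, w x * ‖xbar - x‖ ∂μ := by
    rw [hkey, norm_smul, Real.norm_eq_abs, abs_of_pos (inv_pos.2 hIpos)]
    refine mul_le_mul_of_nonneg_left ?_ (inv_pos.2 hIpos).le
    calc ‖∫ x, w x • (xbar - x) ∂μ‖ ≤ ∫ x, ‖w x • (xbar - x)‖ ∂μ :=
          norm_integral_le_integral_norm _
      _ = ∫ x, w x * ‖xbar - x‖ ∂μ := by
          refine integral_congr_ae ?_
          filter_upwards with x
          rw [norm_smul, Real.norm_eq_abs, abs_of_pos (hw0 x)]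
  -- the good set G
  set G : Set (EuclideanSpace ℝ (Fin d)) :=
    {x | E x - E xbar ≤ 2 * q} ∩ {x | ∀ k, |x k - xbar k| ≤ R₀} with hGdef
  have hGmeas : MeasurableSet G :=
    ((isClosed_le (hEc.sub continuous_const) continuous_const).measurableSet).inter
      (hBall R₀).measurableSet
  set a := (2 * q) ^ ν / η with ha
  have ha0 : 0 ≤ a := div_nonneg (Real.rpow_nonneg (by linarith) ν) hη.le
  set M := ∫ x, ‖x - xbar‖ ∂μ with hM
  have hM0 : 0 ≤ M := integral_nonneg fun x => norm_nonneg _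
  set c' := Real.exp (-α * (E xbar + 2 * q)) with hc'
  -- bound on G
  have hboundG : ∫ x in G, w x * ‖xbar - x‖ ∂μ ≤ a * I := by
    calc ∫ x in G, w x * ‖xbar - x‖ ∂μ ≤ ∫ x in G, a * w x ∂μ := by
          refine setIntegral_mono_on hf.integrableOn
            (hintw.integrableOn.const_mul a) hGmeas ?_
          intro x hx
          obtain ⟨hx1, hx2⟩ := hx
          have hE0 : 0 ≤ E x - E xbar := by linarith [hmin x]
          have h1 : η * ‖x - xbar‖ ≤ |E x - E xbar| ^ ν := hinv x hx2
          have h2 : |E x - E xbar| ^ ν ≤ (2 * q) ^ ν := by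
            refine Real.rpow_le_rpow (abs_nonneg _) ?_ hν.le
            rw [abs_of_nonneg hE0]; exact hx1
          have h3 : ‖xbar - x‖ ≤ a := by
            rw [norm_sub_rev, ha, le_div_iff₀ hη]
            nlinarith
          calc w x * ‖xbar - x‖ ≤ w x * a :=
                mul_le_mul_of_nonneg_left h3 (hw0 x).le
            _ = a * w x := mul_comm _ _
      _ = a * ∫ x in G, w x ∂μ := integral_const_mul a w
      _ ≤ a * I := by
          refine mul_le_mul_of_nonneg_left ?_ ha0
          exact setIntegral_le_integral hintw (by filter_upwards with x; exact (hw0 x).le)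
  -- bound on Gᶜ
  have hboundGc : ∫ x in Gᶜ, w x * ‖xbar - x‖ ∂μ ≤ c' * M := by
    calc ∫ x in Gᶜ, w x * ‖xbar - x‖ ∂μ ≤ ∫ x in Gᶜ, c' * ‖x - xbar‖ ∂μ := by
          refine setIntegral_mono_on hf.integrableOn
            (hmom'.const_mul c').integrableOn hGmeas.compl ?_
          intro x hx
          have hbig : 2 * q < E x - E xbar := by
            rw [hGdef] at hx
            simp only [Set.mem_compl_iff, Set.mem_inter_iff, Set.mem_setOf_eq, not_and_or,
              not_le] at hx
            rcases hx with h | h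
            · exact h
            · have := hfar x (by simpa using h)
              linarith
          have hwle : w x ≤ c' := Real.exp_le_exp.2 (by nlinarith)
          rw [norm_sub_rev]
          exact mul_le_mul_of_nonneg_right hwle (norm_nonneg _)
      _ = c' * ∫ x in Gᶜ, ‖x - xbar‖ ∂μ := integral_const_mul c' _
      _ ≤ c' * M := by
          refine mul_le_mul_of_nonneg_left ?_ (Real.exp_pos _).le
          exact setIntegral_le_integral hmom' (by filter_upwards with x; exact norm_nonneg _)
  -- combine
  have hsplit : ∫ x, w x * ‖xbar - x‖ ∂μ
      = (∫ x in G, w x * ‖xbar - x‖ ∂μ) + ∫ x in Gᶜ, w x * ‖xbar - x‖ ∂μ :=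
    (integral_add_compl hGmeas hf).symm
  have htot : ∫ x, w x * ‖xbar - x‖ ∂μ ≤ a * I + c' * M := by
    rw [hsplit]; exact add_le_add hboundG hboundGc
  have hfinal : I⁻¹ * (a * I + c' * M) ≤ a + Real.exp (-α * q) / B * M := by
    have h1 : I⁻¹ * (a * I) = a := by
      field_simp
    have h2' : I⁻¹ * c' ≤ Real.exp (-α * q) / B := by
      have hcc : c' * B ≤ Real.exp (-α * q) * I := by
        calc c' * B = Real.exp (-α * q) * (Real.exp (-α * (E xbar + q)) * B) := by
              rw [← mul_assoc, ← Real.exp_add, hc']; ring_nf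
          _ ≤ Real.exp (-α * q) * I :=
              mul_le_mul_of_nonneg_left hIlb (Real.exp_pos _).le
      rw [inv_mul_eq_div, div_le_div_iff₀ hIpos hBpos]
      exact hcc
    have h2 : I⁻¹ * (c' * M) ≤ Real.exp (-α * q) / B * M := by
      calc I⁻¹ * (c' * M) = (I⁻¹ * c') * M := by ring
        _ ≤ Real.exp (-α * q) / B * M := mul_le_mul_of_nonneg_right h2' hM0
    calc I⁻¹ * (a * I + c' * M) = I⁻¹ * (a * I) + I⁻¹ * (c' * M) := by ring
      _ ≤ a + Real.exp (-α * q) / B * M := by rw [h1]; exact add_le_add_right h2 a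
  calc ‖xbar - Xα‖ ≤ I⁻¹ * ∫ x, w x * ‖xbar - x‖ ∂μ := hnorm1
    _ ≤ I⁻¹ * (a * I + c' * M) :=
        mul_le_mul_of_nonneg_left htot (inv_pos.2 hIpos).le
    _ ≤ a + Real.exp (-α * q) / B * M := hfinal
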